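/- Monotone occupancy for the endpoint-sampling variant: let (ζ_t : t ≥ 0) be the process started from ζ_0 = {0}, where given ζ_t ≠ ∅, two points a and b are sampled independently and uniformly at random (with repetition) from ζ_t, the contraction is the interval ζ̃_t = {min(a,b), ..., max(a,b)}, and ζ_{t+1} = {L(ζ̃_t) − N^L_t, ..., R(ζ̃_t) + N^R_t} with (N^L_t), (N^R_t) independent geometric random variables with P(N = n) = (1−p)p^n, n ≥ 0. Then for every t ≥ 0 the occupancy function f_t(x) = P(x ∈ ζ_t) is even and decreasing in |x|. -/

import Mathlib

/- The standard specifications randomly fluctuating intervals process.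
States: `none` = empty set, `some (l, r)` with `l ≤ r` = the integer interval {l, ..., r}. -/

open MeasureTheory
open scoped ENNReal

namespace RFI

abbrev State := Option (ℤ × ℤ)

/-- Geometric distribution on ℕ: P(N = n) = (1 - p) * p ^ n. -/
noncomputable def geom (p : ℝ≥0∞) (hp : p < 1) : PMF ℕ :=
  ⟨fun n => (1 - p) * p ^ n, by
    refine ENNReal.summable.hasSum_iff.mpr ?_
    rw [ENNReal.tsum_mul_left, ENNReal.tsum_geometric]
    exact ENNReal.mul_inv_cancel
      (fun h => (not_le.mpr hp) (tsub_eq_zero_iff_le.mp h))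
      (lt_of_le_of_lt tsub_le_self ENNReal.one_lt_top).ne⟩

/-- `x` is occupied, i.e. belongs to the interval represented by the state. -/
def memS (x : ℤ) : State → Prop
  | none => False
  | some (l, r) => l ≤ x ∧ x ≤ r

/-- Transition kernel of the endpoint-sampling variant: two points `a`, `b` are
sampled independently and uniformly (with repetition) from the current interval,
the contraction is {min a b, ..., max a b}, and then the endpoints are expanded
by independent geometric amounts. -/
noncomputable def stepEnd (p : ℝ≥0∞) (hp : p < 1) : State → PMF State
  | none => PMF.pure none
  | some (l, r) =>
      if h : l ≤ r then
        (PMF.uniformOfFinset (Finset.Icc l r) (Finset.nonempty_Icc.mpr h)).bind fun a =>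
          (PMF.uniformOfFinset (Finset.Icc l r) (Finset.nonempty_Icc.mpr h)).bind fun b =>
            (geom p hp).bind fun nL =>
              (geom p hp).bind fun nR =>
                PMF.pure (some (min a b - nL, max a b + nR))
      else PMF.pure none

/-- Distribution at time `t` of the endpoint-sampling process started from `init`. -/
noncomputable def distEnd (p : ℝ≥0∞) (hp : p < 1) (init : State) : ℕ → PMF State
  | 0 => PMF.pure init
  | t + 1 => (distEnd p hp init t).bind (stepEnd p hp)

/-- Occupancy function of the endpoint-sampling process started from {0}. -/
noncomputable def occEnd (p : ℝ≥0∞) (hp : p < 1) (t : ℕ) (x : ℤ) : ℝ≥0∞ :=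
  (distEnd p hp (some (0, 0)) t).toOuterMeasure {s | memS x s}

/-! ### Auxiliary machinery -/

/-- `G p k = (1-p) p^k` for `k ≥ 0`, and `0` otherwise: the probability that
a geometric random variable equals the (possibly negative) integer `k`. -/
noncomputable def G (p : ℝ≥0∞) (k : ℤ) : ℝ≥0∞ := if 0 ≤ k then (1 - p) * p ^ k.toNat else 0

lemma G_of_nonneg {p : ℝ≥0∞} {k : ℤ} (h : 0 ≤ k) : G p k = (1 - p) * p ^ k.toNat :=
  if_pos h

lemma geom_apply (p : ℝ≥0∞) (hp : p < 1) (n : ℕ) : geom p hp n = (1 - p) * p ^ n := rfl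

/-- Explicit formula for the transition kernel between nonempty intervals. -/
noncomputable def Kf (p : ℝ≥0∞) (l0 r0 l r : ℤ) : ℝ≥0∞ :=
  ∑ a ∈ Finset.Icc l0 r0, ∑ b ∈ Finset.Icc l0 r0,
    (((Finset.Icc l0 r0).card : ℝ≥0∞))⁻¹ * (((Finset.Icc l0 r0).card : ℝ≥0∞))⁻¹ *
      (G p (min a b - l) * G p (r - max a b))

section Kernel

variable {p : ℝ≥0∞} {hp : p < 1}

lemma bind_geom_pure (hp : p < 1) (c M l r : ℤ) :
    ((geom p hp).bind fun nR => PMF.pure (some (c, M + (nR : ℤ)) : State)) (some (l, r))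
      = if c = l then G p (r - M) else 0 := by
  rw [PMF.bind_apply]
  by_cases hcM : c = l ∧ M ≤ r
  · obtain ⟨hc, hM⟩ := hcM
    rw [if_pos hc]
    rw [tsum_eq_single (r - M).toNat (fun n hn => ?_)]
    · rw [PMF.pure_apply, if_pos (by subst hc; congr 1; ext <;> simp <;> omega)]
      rw [geom_apply, G_of_nonneg (by omega : (0:ℤ) ≤ r - M), mul_one]
    · rw [PMF.pure_apply, if_neg, mul_zero]
      intro hEq
      apply hn
      have : M + (n : ℤ) = r := by simpa using congrArg (fun s : State => (s.getD (0,0)).2) hEq.symm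
      omega
  · have h0 : ∀ n : ℕ, geom p hp n * (PMF.pure (some (c, M + (n : ℤ)) : State)) (some (l, r)) = 0 := by
      intro n
      rw [PMF.pure_apply, if_neg, mul_zero]
      intro hEq
      have h1 : l = c := by simpa using congrArg (fun s : State => (s.getD (0,0)).1) hEq
      have h2 : r = M + (n : ℤ) := by simpa using congrArg (fun s : State => (s.getD (0,0)).2) hEq
      exact hcM ⟨h1.symm, by omega⟩
    rw [ENNReal.tsum_eq_zero.mpr h0]
    by_cases hc : c = l
    · have hM : ¬ ((0:ℤ) ≤ r - M) := fun hle => hcM ⟨hc, by omega⟩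
      rw [if_pos hc, G, if_neg hM]
    · rw [if_neg hc]

lemma bind_geom_geom_pure (hp : p < 1) (m M l r : ℤ) :
    ((geom p hp).bind fun nL => (geom p hp).bind fun nR =>
        PMF.pure (some (m - (nL : ℤ), M + (nR : ℤ)) : State)) (some (l, r))
      = G p (m - l) * G p (r - M) := by
  rw [PMF.bind_apply]
  have hin : ∀ nL : ℕ, ((geom p hp).bind fun nR =>
      PMF.pure (some (m - (nL : ℤ), M + (nR : ℤ)) : State)) (some (l, r))
      = if m - (nL : ℤ) = l then G p (r - M) else 0 := fun nL => bind_geom_pure hp _ M l r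
  simp only [hin]
  by_cases hm : l ≤ m
  · rw [tsum_eq_single (m - l).toNat (fun n hn => ?_)]
    · rw [if_pos (by omega), geom_apply, G_of_nonneg (by omega : (0:ℤ) ≤ m - l)]
    · rw [if_neg (by omega), mul_zero]
  · have : ∀ n : ℕ, geom p hp n * (if m - (n : ℤ) = l then G p (r - M) else 0) = 0 := by
      intro n; rw [if_neg (by omega), mul_zero]
    rw [ENNReal.tsum_eq_zero.mpr this, G, if_neg (by omega : ¬ (0:ℤ) ≤ m - l), zero_mul]

lemma uniform_bind_apply {l0 r0 : ℤ} (h : l0 ≤ r0) (F : ℤ → PMF State) (x : State) :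
    ((PMF.uniformOfFinset (Finset.Icc l0 r0) (Finset.nonempty_Icc.mpr h)).bind F) x
      = ∑ a ∈ Finset.Icc l0 r0, (((Finset.Icc l0 r0).card : ℝ≥0∞))⁻¹ * F a x := by
  rw [PMF.bind_apply]
  rw [tsum_eq_sum (s := Finset.Icc l0 r0)
    (fun b hb => by
      rw [PMF.uniformOfFinset_apply_of_notMem (Finset.nonempty_Icc.mpr h) hb, zero_mul])]
  exact Finset.sum_congr rfl fun a ha => by
    rw [PMF.uniformOfFinset_apply_of_mem (Finset.nonempty_Icc.mpr h) ha]

lemma stepEnd_apply_some (hp : p < 1) (l0 r0 l r : ℤ) (h : l0 ≤ r0) :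
    stepEnd p hp (some (l0, r0)) (some (l, r)) = Kf p l0 r0 l r := by
  show (if h : l0 ≤ r0 then _ else _ : PMF State) (some (l, r)) = _
  rw [dif_pos h]
  rw [uniform_bind_apply h]
  rw [Kf]
  refine Finset.sum_congr rfl fun a ha => ?_
  rw [uniform_bind_apply h, Finset.mul_sum]
  refine Finset.sum_congr rfl fun b hb => ?_
  rw [bind_geom_geom_pure hp (min a b) (max a b) l r, mul_assoc]

lemma stepEnd_apply_some_of_not (hp : p < 1) (l0 r0 l r : ℤ) (h : ¬ l0 ≤ r0) :
    stepEnd p hp (some (l0, r0)) (some (l, r)) = 0 := by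
  show (if h : l0 ≤ r0 then _ else _ : PMF State) (some (l, r)) = _
  rw [dif_neg h, PMF.pure_apply, if_neg (by simp)]

lemma stepEnd_none (hp : p < 1) (l r : ℤ) :
    stepEnd p hp none (some (l, r)) = 0 := by
  show (PMF.pure none : PMF State) (some (l, r)) = 0
  rw [PMF.pure_apply, if_neg (by simp)]

/-- Reindexing sums over integer intervals by negation. -/
lemma sum_Icc_neg (l0 r0 : ℤ) (f : ℤ → ℝ≥0∞) :
    ∑ a ∈ Finset.Icc (-r0) (-l0), f a = ∑ a ∈ Finset.Icc l0 r0, f (-a) := by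
  refine Finset.sum_nbij' (fun a => -a) (fun a => -a) ?_ ?_ ?_ ?_ ?_
  · intro a ha; simp only [Finset.mem_Icc] at *; omega
  · intro a ha; simp only [Finset.mem_Icc] at *; omega
  · intro a _; ring
  · intro a _; ring
  · intro a _; rw [neg_neg]

lemma sum_Icc_shift (l0 r0 k : ℤ) (f : ℤ → ℝ≥0∞) :
    ∑ a ∈ Finset.Icc (l0 + k) (r0 + k), f a = ∑ a ∈ Finset.Icc l0 r0, f (a + k) := by
  refine Finset.sum_nbij' (fun a => a - k) (fun a => a + k) ?_ ?_ ?_ ?_ ?_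
  · intro a ha; simp only [Finset.mem_Icc] at *; omega
  · intro a ha; simp only [Finset.mem_Icc] at *; omega
  · intro a _; ring
  · intro a _; ring
  · intro a _; rw [sub_add_cancel]

lemma card_Icc_neg (l0 r0 : ℤ) :
    (Finset.Icc (-r0) (-l0)).card = (Finset.Icc l0 r0).card := by
  rw [Int.card_Icc, Int.card_Icc]; congr 1; ring

lemma card_Icc_shift (l0 r0 k : ℤ) :
    (Finset.Icc (l0 + k) (r0 + k)).card = (Finset.Icc l0 r0).card := by
  rw [Int.card_Icc, Int.card_Icc]; congr 1; ring

/-- Kernel lemma K1: reflection invariance. -/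
lemma Kf_reflect (p : ℝ≥0∞) (l0 r0 l r : ℤ) :
    Kf p (-r0) (-l0) (-r) (-l) = Kf p l0 r0 l r := by
  unfold Kf
  rw [card_Icc_neg, sum_Icc_neg]
  refine Finset.sum_congr rfl fun a _ => ?_
  rw [sum_Icc_neg]
  refine Finset.sum_congr rfl fun b _ => ?_
  have h1 : min (-a) (-b) - -r = r - max a b := by rw [min_neg_neg]; ring
  have h2 : -l - max (-a) (-b) = min a b - l := by rw [max_neg_neg]; ring
  rw [h1, h2, mul_comm (G p (r - max a b))]

/-- Kernel lemma K2: translation invariance. -/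
lemma Kf_shift (p : ℝ≥0∞) (l0 r0 l r k : ℤ) :
    Kf p (l0 + k) (r0 + k) (l + k) (r + k) = Kf p l0 r0 l r := by
  unfold Kf
  rw [card_Icc_shift, sum_Icc_shift]
  refine Finset.sum_congr rfl fun a _ => ?_
  rw [sum_Icc_shift]
  refine Finset.sum_congr rfl fun b _ => ?_
  have h1 : min (a + k) (b + k) - (l + k) = min a b - l := by
    rw [min_add_add_right]; ring
  have h2 : r + k - max (a + k) (b + k) = r - max a b := by
    rw [max_add_add_right]; ring
  rw [h1, h2]

lemma G_eq_zero_of_neg {p : ℝ≥0∞} {k : ℤ} (h : k < 0) : G p k = 0 := by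
  rw [G, if_neg (by omega)]

lemma G_mul_G {p : ℝ≥0∞} {a b a' b' : ℤ} (ha : 0 ≤ a) (hb : 0 ≤ b) (ha' : 0 ≤ a')
    (hb' : 0 ≤ b') (hsum : a + b = a' + b') :
    G p a * G p b = G p a' * G p b' := by
  rw [G_of_nonneg ha, G_of_nonneg hb, G_of_nonneg ha', G_of_nonneg hb']
  have h : a.toNat + b.toNat = a'.toNat + b'.toNat := by omega
  have hpow : p ^ a.toNat * p ^ b.toNat = p ^ a'.toNat * p ^ b'.toNat := by
    rw [← pow_add, ← pow_add, h]
  calc (1-p) * p ^ a.toNat * ((1-p) * p ^ b.toNat)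
      = (1-p) * (1-p) * (p ^ a.toNat * p ^ b.toNat) := by ring
    _ = (1-p) * (1-p) * (p ^ a'.toNat * p ^ b'.toNat) := by rw [hpow]
    _ = (1-p) * p ^ a'.toNat * ((1-p) * p ^ b'.toNat) := by ring

/-- Kernel lemma K3: the key comparison. -/
lemma Kf_sigma_le (p : ℝ≥0∞) (l0 r0 l r : ℤ) (h0 : 0 ≤ l0 + r0) (hI : 0 ≤ l + r) :
    Kf p (-r0 - 1) (-l0 - 1) l r ≤ Kf p l0 r0 l r := by
  by_cases hval : l0 ≤ r0
  case neg =>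
    have : Finset.Icc (-r0 - 1) (-l0 - 1) = ∅ := by
      rw [Finset.Icc_eq_empty_iff]; omega
    rw [Kf, this, Finset.sum_empty]
    exact zero_le
  -- notation
  have hcard : (Finset.Icc (-r0 - 1) (-l0 - 1)).card = (Finset.Icc l0 r0).card := by
    rw [Int.card_Icc, Int.card_Icc]; congr 1; ring
  set c : ℝ≥0∞ := (((Finset.Icc l0 r0).card : ℝ≥0∞))⁻¹ with hc
  have hKf2 : Kf p (-r0 - 1) (-l0 - 1) l r
      = ∑ x ∈ (Finset.Icc (-r0 - 1) (-l0 - 1)) ×ˢ (Finset.Icc (-r0 - 1) (-l0 - 1)),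
          c * c * (G p (min x.1 x.2 - l) * G p (r - max x.1 x.2)) := by
    rw [Finset.sum_product, Kf, hcard]
  have hKf1 : Kf p l0 r0 l r
      = ∑ x ∈ (Finset.Icc l0 r0) ×ˢ (Finset.Icc l0 r0),
          c * c * (G p (min x.1 x.2 - l) * G p (r - max x.1 x.2)) := by
    rw [Finset.sum_product, Kf]
  rw [hKf1, hKf2]
  -- drop to intersections with [l, r]
  set F : ℤ × ℤ → ℝ≥0∞ := fun x => c * c * (G p (min x.1 x.2 - l) * G p (r - max x.1 x.2)) with hF
  have hFzero : ∀ x : ℤ × ℤ, (¬ (l ≤ x.1 ∧ x.1 ≤ r)) ∨ (¬ (l ≤ x.2 ∧ x.2 ≤ r)) → F x = 0 := by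
    intro x hx
    have : min x.1 x.2 - l < 0 ∨ r - max x.1 x.2 < 0 := by
      rcases hx with hx | hx <;> simp only [min_def, max_def] <;> split_ifs <;> omega
    rcases this with h | h
    · rw [hF]; simp only; rw [G_eq_zero_of_neg h, zero_mul, mul_zero]
    · rw [hF]; simp only; rw [G_eq_zero_of_neg h, mul_zero, mul_zero]
  set u1 : ℤ := max l0 l
  set v1 : ℤ := min r0 r
  set u2 : ℤ := max (-r0 - 1) l
  set v2 : ℤ := min (-l0 - 1) r
  have hlen : v2 - u2 ≤ v1 - u1 := by
    simp only [u1, v1, u2, v2, min_def, max_def]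
    split_ifs <;> omega
  set k : ℤ := u1 - u2
  -- restrict LHS sum to J2 × J2
  have hsub2 : (Finset.Icc u2 v2) ×ˢ (Finset.Icc u2 v2)
      ⊆ (Finset.Icc (-r0 - 1) (-l0 - 1)) ×ˢ (Finset.Icc (-r0 - 1) (-l0 - 1)) := by
    intro x hx
    simp only [Finset.mem_product, Finset.mem_Icc] at *
    simp only [u2, v2] at hx
    omega
  have hLHS : ∑ x ∈ (Finset.Icc (-r0 - 1) (-l0 - 1)) ×ˢ (Finset.Icc (-r0 - 1) (-l0 - 1)), F x
      = ∑ x ∈ (Finset.Icc u2 v2) ×ˢ (Finset.Icc u2 v2), F x := by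
    refine (Finset.sum_subset hsub2 ?_).symm
    intro x hx hnx
    apply hFzero
    simp only [Finset.mem_product, Finset.mem_Icc] at hx hnx
    simp only [u2, v2] at hnx
    omega
  rw [hLHS]
  -- shift J2 into J1
  have hstep : ∑ x ∈ (Finset.Icc u2 v2) ×ˢ (Finset.Icc u2 v2), F x
      = ∑ x ∈ (Finset.Icc (u2 + k) (v2 + k)) ×ˢ (Finset.Icc (u2 + k) (v2 + k)), F x := by
    refine Finset.sum_nbij' (fun x => (x.1 + k, x.2 + k)) (fun x => (x.1 - k, x.2 - k)) ?_ ?_ ?_ ?_ ?_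
    · intro x hx; simp only [Finset.mem_product, Finset.mem_Icc] at *; omega
    · intro x hx; simp only [Finset.mem_product, Finset.mem_Icc] at *; omega
    · intro x _; obtain ⟨x1, x2⟩ := x; simp only [Prod.mk.injEq]; omega
    · intro x _; obtain ⟨x1, x2⟩ := x; simp only [Prod.mk.injEq]; omega
    · intro x hx
      simp only [Finset.mem_product, Finset.mem_Icc] at hx
      have hm : min (x.1 + k) (x.2 + k) = min x.1 x.2 + k := by rw [min_add_add_right]
      have hM : max (x.1 + k) (x.2 + k) = max x.1 x.2 + k := by rw [max_add_add_right]
      rw [hF]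
      simp only [hm, hM]
      congr 1
      have hminx : l ≤ min x.1 x.2 ∧ max x.1 x.2 ≤ r := by
        constructor <;> simp only [min_def, max_def, u2, v2] at * <;> split_ifs <;> omega
      have hminx' : l ≤ min x.1 x.2 + k ∧ max x.1 x.2 + k ≤ r := by
        have h1 : u1 ≤ min x.1 x.2 + k ∧ max x.1 x.2 + k ≤ v1 := by
          simp only [min_def, max_def, k] at *
          split_ifs at * <;> omega
        simp only [u1, v1] at h1
        omega
      exact (G_mul_G (by omega) (by omega) (by omega) (by omega) (by ring)).symm
  rw [hstep]
  -- inclusion into J1 × J1 and then into full square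
  refine Finset.sum_le_sum_of_subset ?_
  intro x hx
  simp only [Finset.mem_product, Finset.mem_Icc] at *
  have h1 : u2 + k = u1 := by simp only [k]; ring
  have h2 : v2 + k ≤ v1 := by simp only [k]; omega
  simp only [u1, v1] at *
  omega

end Kernel

section Invariant

variable {p : ℝ≥0∞}

/-- Probability that the process at time `t` is exactly the interval `[l, r]`. -/
noncomputable def q (p : ℝ≥0∞) (hp : p < 1) (t : ℕ) (l r : ℤ) : ℝ≥0∞ :=
  distEnd p hp (some (0, 0)) t (some (l, r))

lemma q_congr (hp : p < 1) (t : ℕ) {l r l' r' : ℤ} (h1 : l = l') (h2 : r = r') :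
    q p hp t l r = q p hp t l' r' := by rw [h1, h2]

/-- Kernel as a function of states (pairs). -/
noncomputable def K (p : ℝ≥0∞) (hp : p < 1) (s I : ℤ × ℤ) : ℝ≥0∞ :=
  stepEnd p hp (some s) (some I)

lemma tsum_state (f : State → ℝ≥0∞) (h : f none = 0) :
    ∑' o : State, f o = ∑' s : ℤ × ℤ, f (some s) := by
  refine (Function.Injective.tsum_eq (Option.some_injective _) ?_).symm
  rintro (_ | s) hx
  · exact absurd h hx
  · exact ⟨s, rfl⟩

lemma q_succ (hp : p < 1) (t : ℕ) (I : ℤ × ℤ) :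
    q p hp (t + 1) I.1 I.2 = ∑' s : ℤ × ℤ, q p hp t s.1 s.2 * K p hp s I := by
  show (distEnd p hp (some (0,0)) t).bind (stepEnd p hp) (some (I.1, I.2)) = _
  rw [PMF.bind_apply]
  rw [tsum_state _ (by rw [stepEnd_none hp, mul_zero])]
  rfl

lemma K_reflect (hp : p < 1) (s I : ℤ × ℤ) :
    K p hp (-s.2, -s.1) (-I.2, -I.1) = K p hp s I := by
  by_cases h : s.1 ≤ s.2
  · rw [K, K, stepEnd_apply_some hp _ _ _ _ h, stepEnd_apply_some hp _ _ _ _ (by omega)]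
    exact Kf_reflect p s.1 s.2 I.1 I.2
  · rw [K, K, stepEnd_apply_some_of_not hp _ _ _ _ h,
      stepEnd_apply_some_of_not hp _ _ _ _ (by omega)]

lemma K_shift (hp : p < 1) (s I : ℤ × ℤ) (k : ℤ) :
    K p hp (s.1 + k, s.2 + k) (I.1 + k, I.2 + k) = K p hp s I := by
  by_cases h : s.1 ≤ s.2
  · rw [K, K, stepEnd_apply_some hp _ _ _ _ h, stepEnd_apply_some hp _ _ _ _ (by omega)]
    exact Kf_shift p s.1 s.2 I.1 I.2 k
  · rw [K, K, stepEnd_apply_some_of_not hp _ _ _ _ h,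
      stepEnd_apply_some_of_not hp _ _ _ _ (by omega)]

lemma K_sigma_le (hp : p < 1) (s I : ℤ × ℤ) (h0 : 0 ≤ s.1 + s.2) (hI : 0 ≤ I.1 + I.2) :
    K p hp (-s.2 - 1, -s.1 - 1) I ≤ K p hp s I := by
  by_cases h : s.1 ≤ s.2
  · rw [K, K, stepEnd_apply_some hp _ _ _ _ h, stepEnd_apply_some hp _ _ _ _ (by omega)]
    exact Kf_sigma_le p s.1 s.2 I.1 I.2 h0 hI
  · rw [K, K, stepEnd_apply_some_of_not hp _ _ _ _ h,
      stepEnd_apply_some_of_not hp _ _ _ _ (by omega)]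

/-- The reflection equivalence on pairs. -/
def reflE : ℤ × ℤ ≃ ℤ × ℤ where
  toFun s := (-s.2, -s.1)
  invFun s := (-s.2, -s.1)
  left_inv s := by simp
  right_inv s := by simp

/-- The slide-reflection involution `σ`. -/
def sigE : ℤ × ℤ ≃ ℤ × ℤ where
  toFun s := (-s.2 - 1, -s.1 - 1)
  invFun s := (-s.2 - 1, -s.1 - 1)
  left_inv s := by simp
  right_inv s := by simp

/-- The translation equivalence. -/
def shiftE : ℤ × ℤ ≃ ℤ × ℤ where
  toFun s := (s.1 + 1, s.2 + 1)
  invFun s := (s.1 - 1, s.2 - 1)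
  left_inv s := by simp
  right_inv s := by simp

lemma rearrange_le {x1 x2 y1 y2 : ℝ≥0∞} (hx : x2 ≤ x1) (hy : y2 ≤ y1) :
    x2 * y1 + x1 * y2 ≤ x1 * y1 + x2 * y2 := by
  obtain ⟨d, hd⟩ := exists_add_of_le hx
  obtain ⟨e, he⟩ := exists_add_of_le hy
  subst hd
  subst he
  calc x2 * (y2 + e) + (x2 + d) * y2
      = (x2 * y2 + x2 * e) + (x2 * y2 + d * y2) := by ring
    _ ≤ ((x2 * y2 + x2 * e) + (x2 * y2 + d * y2)) + d * e := le_self_add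
    _ = (x2 + d) * (y2 + e) + x2 * y2 := by ring

/-- Cancellation of doubling in `ℝ≥0∞`. -/
lemma le_of_add_le_add_self {x y : ℝ≥0∞} (h : x + x ≤ y + y) : x ≤ y := by
  rw [← two_mul, ← two_mul] at h
  exact (ENNReal.mul_le_mul_iff_right (by norm_num) (by norm_num)).mp h

/-- The main invariant: reflection symmetry and monotone sliding. -/
lemma invariant (hp : p < 1) (t : ℕ) :
    (∀ l r : ℤ, q p hp t l r = q p hp t (-r) (-l)) ∧
    (∀ l r : ℤ, 0 ≤ l + r → q p hp t (l + 1) (r + 1) ≤ q p hp t l r) := by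
  induction t with
  | zero =>
    constructor
    · intro l r
      show (PMF.pure (some ((0:ℤ),(0:ℤ)))) (some (l, r)) = (PMF.pure (some ((0:ℤ),(0:ℤ)))) (some (-r, -l))
      rw [PMF.pure_apply, PMF.pure_apply]
      congr 1
      simp only [eq_iff_iff, Option.some.injEq, Prod.mk.injEq]
      omega
    · intro l r h
      show (PMF.pure (some ((0:ℤ),(0:ℤ)))) (some (l+1, r+1)) ≤ (PMF.pure (some ((0:ℤ),(0:ℤ)))) (some (l, r))
      rw [PMF.pure_apply, if_neg (by simp only [Option.some.injEq, Prod.mk.injEq]; omega)]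
      exact zero_le
  | succ t ih =>
    obtain ⟨ihS, ihM⟩ := ih
    have hSpair : ∀ s : ℤ × ℤ, q p hp t s.1 s.2 = q p hp t (reflE s).1 (reflE s).2 := by
      intro s; exact ihS s.1 s.2
    constructor
    · intro l r
      rw [q_succ hp t (l, r), q_succ hp t (-r, -l)]
      rw [← Equiv.tsum_eq reflE (fun s => q p hp t s.1 s.2 * K p hp s (-r, -l))]
      refine tsum_congr fun s => ?_
      have h1 : q p hp t (reflE s).1 (reflE s).2 = q p hp t s.1 s.2 := (hSpair s).symm
      have h2 : K p hp (reflE s) (-r, -l) = K p hp s (l, r) := K_reflect hp s (l, r)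
      rw [h1, h2]
    · intro l r hlr
      rw [q_succ hp t (l + 1, r + 1), q_succ hp t (l, r)]
      -- rewrite the shifted kernel
      have hK : ∀ s : ℤ × ℤ, K p hp s (l + 1, r + 1) = K p hp (s.1 - 1, s.2 - 1) (l, r) := by
        intro s
        have := K_shift hp (s.1 - 1, s.2 - 1) (l, r) 1
        simpa using this
      simp only [hK]
      rw [← Equiv.tsum_eq shiftE
        (fun s => q p hp t s.1 s.2 * K p hp (s.1 - 1, s.2 - 1) (l, r))]
      have hform : ∀ s : ℤ × ℤ,
          q p hp t (shiftE s).1 (shiftE s).2 *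
            K p hp ((shiftE s).1 - 1, (shiftE s).2 - 1) (l, r)
          = q p hp t (sigE s).1 (sigE s).2 * K p hp s (l, r) := by
        intro s
        have h1 : ((shiftE s).1 - 1, (shiftE s).2 - 1) = s := by
          show (s.1 + 1 - 1, s.2 + 1 - 1) = s; ext <;> simp
        have h2 : q p hp t (shiftE s).1 (shiftE s).2 = q p hp t (sigE s).1 (sigE s).2 := by
          show q p hp t (s.1 + 1) (s.2 + 1) = q p hp t (-s.2 - 1) (-s.1 - 1)
          rw [ihS (s.1 + 1) (s.2 + 1)]
          exact q_congr hp t (by ring) (by ring)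
        rw [h1, h2]
      rw [tsum_congr hform]
      -- now the pairing argument
      set A : ℤ × ℤ → ℝ≥0∞ := fun s => q p hp t s.1 s.2 * K p hp s (l, r) with hA
      set B : ℤ × ℤ → ℝ≥0∞ := fun s => q p hp t (sigE s).1 (sigE s).2 * K p hp s (l, r) with hB
      show ∑' s, B s ≤ ∑' s, A s
      have hq_sig_le : ∀ s : ℤ × ℤ, 0 ≤ s.1 + s.2 →
          q p hp t (sigE s).1 (sigE s).2 ≤ q p hp t s.1 s.2 := by
        intro s hs
        show q p hp t (-s.2 - 1) (-s.1 - 1) ≤ q p hp t s.1 s.2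
        have h1 : q p hp t (-s.2 - 1) (-s.1 - 1) = q p hp t (s.1 + 1) (s.2 + 1) := by
          rw [ihS (s.1 + 1) (s.2 + 1)]
          exact q_congr hp t (by ring) (by ring)
        rw [h1]
        exact ihM s.1 s.2 hs
      have hpair : ∀ s : ℤ × ℤ, B s + B (sigE s) ≤ A s + A (sigE s) := by
        intro s
        have hsig2 : sigE (sigE s) = s := sigE.left_inv s
        rcases le_or_gt 0 (s.1 + s.2) with hpos | hneg
        · have hx : q p hp t (sigE s).1 (sigE s).2 ≤ q p hp t s.1 s.2 := hq_sig_le s hpos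
          have hy : K p hp (sigE s) (l, r) ≤ K p hp s (l, r) := K_sigma_le hp s (l, r) hpos hlr
          have := rearrange_le hx hy
          simp only [hA, hB, hsig2]
          calc q p hp t (sigE s).1 (sigE s).2 * K p hp s (l, r)
                + q p hp t s.1 s.2 * K p hp (sigE s) (l, r)
              ≤ q p hp t s.1 s.2 * K p hp s (l, r)
                + q p hp t (sigE s).1 (sigE s).2 * K p hp (sigE s) (l, r) := this
            _ = _ := rfl
        · rcases le_or_gt (s.1 + s.2) (-2) with hle2 | hmid
          · have hpos' : 0 ≤ (sigE s).1 + (sigE s).2 := by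
              show 0 ≤ (-s.2 - 1) + (-s.1 - 1); omega
            have hx : q p hp t s.1 s.2 ≤ q p hp t (sigE s).1 (sigE s).2 := by
              have := hq_sig_le (sigE s) hpos'
              rw [hsig2] at this; exact this
            have hy : K p hp s (l, r) ≤ K p hp (sigE s) (l, r) := by
              have := K_sigma_le hp (sigE s) (l, r) hpos' hlr
              rw [show ((-(sigE s).2 - 1, -(sigE s).1 - 1) : ℤ × ℤ) = s by
                show ((-(-s.1 - 1) - 1, -(-s.2 - 1) - 1) : ℤ × ℤ) = s; ext <;> simp] at this
              exact this
            have := rearrange_le hx hy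
            simp only [hA, hB, hsig2]
            calc q p hp t (sigE s).1 (sigE s).2 * K p hp s (l, r)
                  + q p hp t s.1 s.2 * K p hp (sigE s) (l, r)
                = q p hp t s.1 s.2 * K p hp (sigE s) (l, r)
                  + q p hp t (sigE s).1 (sigE s).2 * K p hp s (l, r) := by ring
              _ ≤ q p hp t (sigE s).1 (sigE s).2 * K p hp (sigE s) (l, r)
                  + q p hp t s.1 s.2 * K p hp s (l, r) := this
              _ = _ := by ring
          · have hfix : sigE s = s := by
              have h1 : s.1 + s.2 = -1 := by omega
              show ((-s.2 - 1, -s.1 - 1) : ℤ × ℤ) = s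
              ext <;> simp <;> omega
            rw [hfix]
            have hBA : B s = A s := by simp only [hA, hB, hfix]
            rw [hBA]
      apply le_of_add_le_add_self
      have hBrw : ∑' s, B s = ∑' s, B (sigE s) := (Equiv.tsum_eq sigE B).symm
      have hArw : ∑' s, A s = ∑' s, A (sigE s) := (Equiv.tsum_eq sigE A).symm
      calc (∑' s, B s) + (∑' s, B s)
          = (∑' s, B s) + (∑' s, B (sigE s)) := by rw [← hBrw]
        _ = ∑' s, (B s + B (sigE s)) := (ENNReal.tsum_add).symm
        _ ≤ ∑' s, (A s + A (sigE s)) := ENNReal.tsum_le_tsum hpair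
        _ = (∑' s, A s) + (∑' s, A (sigE s)) := ENNReal.tsum_add
        _ = (∑' s, A s) + (∑' s, A s) := by rw [← hArw]

end Invariant

section Occupancy

variable {p : ℝ≥0∞}

lemma occEnd_eq (hp : p < 1) (t : ℕ) (x : ℤ) :
    occEnd p hp t x = ∑' s : ℤ × ℤ, q p hp t s.1 s.2 *
      (if s.1 ≤ x ∧ x ≤ s.2 then 1 else 0) := by
  classical
  rw [occEnd, PMF.toOuterMeasure_apply]
  rw [tsum_state _ (by simp [Set.indicator_apply, memS])]
  refine tsum_congr fun s => ?_
  rw [Set.indicator_apply]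
  by_cases h : s.1 ≤ x ∧ x ≤ s.2
  · rw [if_pos (by show memS x (some (s.1, s.2)); exact h), if_pos h, mul_one]; rfl
  · rw [if_neg (by show ¬ memS x (some (s.1, s.2)); exact h), if_neg h, mul_zero]

lemma occEnd_even (hp : p < 1) (t : ℕ) (x : ℤ) :
    occEnd p hp t x = occEnd p hp t (-x) := by
  rw [occEnd_eq hp t x, occEnd_eq hp t (-x)]
  rw [← Equiv.tsum_eq reflE (fun s => q p hp t s.1 s.2 * (if s.1 ≤ -x ∧ -x ≤ s.2 then 1 else 0))]
  refine tsum_congr fun s => ?_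
  have h1 : q p hp t (reflE s).1 (reflE s).2 = q p hp t s.1 s.2 :=
    ((invariant hp t).1 s.1 s.2).symm
  rw [h1]
  congr 1
  simp only [reflE, Equiv.coe_fn_mk]
  congr 1
  simp only [eq_iff_iff]
  omega

/-- The slide-up lemma: moving an interval rightwards towards the center increases mass. -/
lemma slide_up (hp : p < 1) (t : ℕ) :
    ∀ (n : ℕ) (l r : ℤ), l + r + 2 * (n : ℤ) ≤ 0 →
      q p hp t l r ≤ q p hp t (l + n) (r + n) := by
  intro n
  induction n with
  | zero => intro l r _; simp
  | succ n ihn =>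
    intro l r h
    have step : q p hp t l r ≤ q p hp t (l + 1) (r + 1) := by
      have hS := (invariant hp t).1
      have hM := (invariant hp t).2
      have h1 : q p hp t l r = q p hp t (-r) (-l) := hS l r
      have h2 : q p hp t (l + 1) (r + 1) = q p hp t (-r - 1) (-l - 1) := by
        rw [hS (l+1) (r+1)]
        exact q_congr hp t (by ring) (by ring)
      rw [h1, h2]
      have := hM (-r - 1) (-l - 1) (by omega)
      calc q p hp t (-r) (-l) = q p hp t (-r - 1 + 1) (-l - 1 + 1) :=
            q_congr hp t (by ring) (by ring)
        _ ≤ q p hp t (-r - 1) (-l - 1) := this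
    calc q p hp t l r ≤ q p hp t (l + 1) (r + 1) := step
      _ ≤ q p hp t (l + 1 + n) (r + 1 + n) := ihn (l + 1) (r + 1) (by push_cast at h ⊢; omega)
      _ = q p hp t (l + (n + 1 : ℕ)) (r + (n + 1 : ℕ)) :=
            q_congr hp t (by push_cast; ring) (by push_cast; ring)

/-- The occupancy comparison for the boundary pieces. -/
lemma q_theta_le (hp : p < 1) (t : ℕ) {x l : ℤ} (hx : 0 ≤ x) (hl : l ≤ x) :
    q p hp t (x + 1) (2 * x + 1 - l) ≤ q p hp t l x := by
  have hS := (invariant hp t).1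
  have h1 : q p hp t (x + 1) (2 * x + 1 - l) = q p hp t (l - 2 * x - 1) (-x - 1) := by
    rw [hS (x+1) (2*x+1-l)]
    exact q_congr hp t (by ring) (by ring)
  rw [h1]
  rcases le_or_gt (l + x) 0 with hc | hc
  · have := slide_up hp t (2 * x + 1).toNat (l - 2 * x - 1) (-x - 1) (by omega)
    calc q p hp t (l - 2 * x - 1) (-x - 1)
        ≤ q p hp t (l - 2 * x - 1 + ((2 * x + 1).toNat : ℤ)) (-x - 1 + ((2 * x + 1).toNat : ℤ)) := this
      _ = q p hp t l x := q_congr hp t (by omega) (by omega)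
  · have := slide_up hp t (x + 1 - l).toNat (l - 2 * x - 1) (-x - 1) (by omega)
    have h2 : q p hp t (l - 2 * x - 1 + ((x + 1 - l).toNat : ℤ)) (-x - 1 + ((x + 1 - l).toNat : ℤ))
        = q p hp t (-x) (-l) := q_congr hp t (by omega) (by omega)
    rw [h2] at this
    calc q p hp t (l - 2 * x - 1) (-x - 1) ≤ q p hp t (-x) (-l) := this
      _ = q p hp t l x := (hS l x).symm

/-- The reflection-about-`x + 1/2` involution. -/
def thetaE (x : ℤ) : ℤ × ℤ ≃ ℤ × ℤ where
  toFun s := (2 * x + 1 - s.2, 2 * x + 1 - s.1)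
  invFun s := (2 * x + 1 - s.2, 2 * x + 1 - s.1)
  left_inv s := by ext <;> simp <;> ring
  right_inv s := by ext <;> simp <;> ring

lemma occEnd_antitone_step (hp : p < 1) (t : ℕ) (x : ℤ) (hx : 0 ≤ x) :
    occEnd p hp t (x + 1) ≤ occEnd p hp t x := by
  rw [occEnd_eq hp t x, occEnd_eq hp t (x + 1)]
  set Q : ℤ × ℤ → ℝ≥0∞ := fun s => q p hp t s.1 s.2 with hQ
  have splitB : ∀ s : ℤ × ℤ,
      (if s.1 ≤ x + 1 ∧ x + 1 ≤ s.2 then (1:ℝ≥0∞) else 0)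
      = (if (s.1 ≤ x ∧ x ≤ s.2) ∧ (s.1 ≤ x + 1 ∧ x + 1 ≤ s.2) then 1 else 0)
        + (if s.1 = x + 1 ∧ x + 1 ≤ s.2 then 1 else 0) := by
    intro s; split_ifs <;> first | omega | simp
  have splitA : ∀ s : ℤ × ℤ,
      (if s.1 ≤ x ∧ x ≤ s.2 then (1:ℝ≥0∞) else 0)
      = (if (s.1 ≤ x ∧ x ≤ s.2) ∧ (s.1 ≤ x + 1 ∧ x + 1 ≤ s.2) then 1 else 0)
        + (if s.1 ≤ x ∧ s.2 = x then 1 else 0) := by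
    intro s; split_ifs <;> first | omega | simp
  have hB : ∑' s : ℤ × ℤ, Q s * (if s.1 ≤ x + 1 ∧ x + 1 ≤ s.2 then 1 else 0)
      = (∑' s : ℤ × ℤ, Q s * (if (s.1 ≤ x ∧ x ≤ s.2) ∧ (s.1 ≤ x + 1 ∧ x + 1 ≤ s.2) then 1 else 0))
        + ∑' s : ℤ × ℤ, Q s * (if s.1 = x + 1 ∧ x + 1 ≤ s.2 then 1 else 0) := by
    rw [← ENNReal.tsum_add]
    refine tsum_congr fun s => ?_
    rw [splitB s, mul_add]
  have hA : ∑' s : ℤ × ℤ, Q s * (if s.1 ≤ x ∧ x ≤ s.2 then 1 else 0)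
      = (∑' s : ℤ × ℤ, Q s * (if (s.1 ≤ x ∧ x ≤ s.2) ∧ (s.1 ≤ x + 1 ∧ x + 1 ≤ s.2) then 1 else 0))
        + ∑' s : ℤ × ℤ, Q s * (if s.1 ≤ x ∧ s.2 = x then 1 else 0) := by
    rw [← ENNReal.tsum_add]
    refine tsum_congr fun s => ?_
    rw [splitA s, mul_add]
  rw [hA, hB]
  refine add_le_add le_rfl ?_
  -- compare the boundary pieces via the involution θ
  have hre : ∑' s : ℤ × ℤ, Q s * (if s.1 = x + 1 ∧ x + 1 ≤ s.2 then 1 else 0)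
      = ∑' s : ℤ × ℤ, Q (thetaE x s) * (if s.1 ≤ x ∧ s.2 = x then 1 else 0) := by
    rw [← Equiv.tsum_eq (thetaE x)
      (fun s => Q s * (if s.1 = x + 1 ∧ x + 1 ≤ s.2 then 1 else 0))]
    refine tsum_congr fun s => ?_
    congr 1
    have : ((thetaE x s).1 = x + 1 ∧ x + 1 ≤ (thetaE x s).2) ↔ (s.1 ≤ x ∧ s.2 = x) := by
      simp only [thetaE, Equiv.coe_fn_mk]
      omega
    exact if_congr this rfl rfl
  rw [hre]
  refine ENNReal.tsum_le_tsum fun s => ?_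
  by_cases h : s.1 ≤ x ∧ s.2 = x
  · rw [if_pos h, mul_one, mul_one]
    have := q_theta_le hp t hx h.1
    have hth : Q (thetaE x s) = q p hp t (x + 1) (2 * x + 1 - s.1) := by
      simp only [hQ, thetaE, Equiv.coe_fn_mk]
      congr 1
      omega
    rw [hth]
    calc q p hp t (x + 1) (2 * x + 1 - s.1) ≤ q p hp t s.1 x := this
      _ = Q s := by rw [hQ]; congr 1; omega
  · rw [if_neg h, mul_zero, mul_zero]

lemma occEnd_antitone_nonneg (hp : p < 1) (t : ℕ) :
    ∀ a b : ℤ, 0 ≤ a → a ≤ b → occEnd p hp t b ≤ occEnd p hp t a := by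
  intro a b ha hab
  have key : ∀ n : ℕ, occEnd p hp t (a + n) ≤ occEnd p hp t a := by
    intro n
    induction n with
    | zero => simp
    | succ n ih =>
      have h1 : occEnd p hp t (a + n + 1) ≤ occEnd p hp t (a + n) :=
        occEnd_antitone_step hp t (a + n) (by positivity)
      have h2 : (a + ((n : ℤ) + 1)) = a + n + 1 := by ring
      calc occEnd p hp t (a + ((n + 1 : ℕ) : ℤ))
          = occEnd p hp t (a + n + 1) := by push_cast; rw [h2]
        _ ≤ occEnd p hp t (a + n) := h1
        _ ≤ occEnd p hp t a := ih
  have hb : b = a + ((b - a).toNat : ℤ) := by omega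
  rw [hb]
  exact key (b - a).toNat

end Occupancy

/-- monotone occupancy for the endpoint-sampling variant: the
occupancy function of the process started from {0} is even and decreasing in |x|. -/
theorem occupancy_even_and_decreasing_endpoint (p : ℝ≥0∞) (hp0 : 0 < p)
    (hp1 : p < 1) (t : ℕ) :
    (∀ x : ℤ, occEnd p hp1 t x = occEnd p hp1 t (-x)) ∧
    (∀ x y : ℤ, |x| ≤ |y| → occEnd p hp1 t y ≤ occEnd p hp1 t x) := by
  constructor
  · exact fun x => occEnd_even hp1 t x
  · intro x y hxy
    have habs : ∀ z : ℤ, occEnd p hp1 t z = occEnd p hp1 t |z| := by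
      intro z
      rcases abs_choice z with h | h
      · rw [h]
      · rw [h, ← occEnd_even hp1 t z]
    rw [habs x, habs y]
    exact occEnd_antitone_nonneg hp1 t |x| |y| (abs_nonneg x) hxy

end RFI
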